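/- Let n ≥ 1, let p ≥ 1 be a real number, and let f : [0,1]ⁿ → ℝ satisfy 0 ≤ f(t) ≤ 1 − max_{j=1}^{n} t_j for every t ∈ [0,1]ⁿ. Define δ^f(t)ᵢ = f(t) if i is the (least) index attaining the maximum of the components of t, and 0 otherwise. Then δ^f is minimal for the Gödel t-conorm and the l_p-norm: for every t-conorm boost function δ′ : [0,1]ⁿ → [0,1]ⁿ and every t ∈ [0,1]ⁿ, if ‖δ′(t)‖_p < ‖δ^f(t)‖_p then max_{j=1}^{n} (t_j + δ′(t)_j) < max_{j=1}^{n} (t_j + δ^f(t)_j), where ‖x‖_p = (∑_{k=1}^{n} |x_k|^p)^{1/p}. -/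

import Mathlib

/-- The least index attaining the maximum of the components of `t : Fin (n+1) → ℝ`. -/
noncomputable def argmaxIdx {n : ℕ} (t : Fin (n + 1) → ℝ) : Fin (n + 1) :=
  (Finset.univ.filter (fun i => ∀ j, t j ≤ t i)).min' (by
    obtain ⟨i, -, hi⟩ :=
      Finset.exists_max_image (Finset.univ : Finset (Fin (n + 1))) t ⟨0, Finset.mem_univ 0⟩
    exact ⟨i, Finset.mem_filter.mpr ⟨Finset.mem_univ i, fun j => hi j (Finset.mem_univ j)⟩⟩)

/-- `δ^f(t)ᵢ = f(t)` if `i` is the least index attaining the maximum of the components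
of `t`, and `0` otherwise. -/
noncomputable def deltaF {n : ℕ} (f : (Fin (n + 1) → ℝ) → ℝ)
    (t : Fin (n + 1) → ℝ) (i : Fin (n + 1)) : ℝ :=
  if i = argmaxIdx t then f t else 0

/-- The `l_p`-norm of a vector: `‖x‖_p = (∑ k |x_k|^p)^(1/p)`. -/
noncomputable def lpNorm {n : ℕ} (p : ℝ) (x : Fin (n + 1) → ℝ) : ℝ :=
  (∑ k, |x k| ^ p) ^ (1 / p)

lemma argmaxIdx_spec {n : ℕ} (t : Fin (n + 1) → ℝ) : ∀ j, t j ≤ t (argmaxIdx t) := by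
  have hne : (Finset.univ.filter (fun i => ∀ j, t j ≤ t i)).Nonempty := by
    obtain ⟨i, -, hi⟩ :=
      Finset.exists_max_image (Finset.univ : Finset (Fin (n + 1))) t ⟨0, Finset.mem_univ 0⟩
    exact ⟨i, Finset.mem_filter.mpr ⟨Finset.mem_univ i, fun j => hi j (Finset.mem_univ j)⟩⟩
  exact (Finset.mem_filter.mp (Finset.min'_mem _ hne)).2

lemma abs_le_lpNorm {n : ℕ} (p : ℝ) (hp : 0 < p) (x : Fin (n + 1) → ℝ) (j : Fin (n + 1)) :
    |x j| ≤ lpNorm p x := by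
  have h1 : |x j| ^ p ≤ ∑ k, |x k| ^ p := by
    apply Finset.single_le_sum (f := fun k => |x k| ^ p) (fun k _ => ?_) (Finset.mem_univ j)
    exact Real.rpow_nonneg (abs_nonneg _) p
  have h2 : (|x j| ^ p) ^ (1 / p) ≤ (∑ k, |x k| ^ p) ^ (1 / p) :=
    Real.rpow_le_rpow (Real.rpow_nonneg (abs_nonneg _) p) h1 (by positivity)
  rw [← Real.rpow_mul (abs_nonneg _), mul_one_div_cancel hp.ne', Real.rpow_one] at h2
  simpa [lpNorm] using h2

/-- Minimality of `δ^f` for the Gödel t-conorm and the `l_p`-norm: if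
`0 ≤ f(t) ≤ 1 − max_j t_j` on `[0,1]ⁿ`, then for every t-conorm boost function `δ′`
and every `t ∈ [0,1]ⁿ`, `‖δ′(t)‖_p < ‖δ^f(t)‖_p` implies
`max_j (t_j + δ′(t)_j) < max_j (t_j + δ^f(t)_j)`. -/
theorem deltaF_minimal (n : ℕ) (p : ℝ) (hp : 1 ≤ p)
    (f : (Fin (n + 1) → ℝ) → ℝ)
    (hf : ∀ t : Fin (n + 1) → ℝ, (∀ i, t i ∈ Set.Icc (0 : ℝ) 1) →
      0 ≤ f t ∧ f t ≤ 1 - Finset.univ.sup' Finset.univ_nonempty t) :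
    ∀ δ' : (Fin (n + 1) → ℝ) → (Fin (n + 1) → ℝ),
      (∀ t : Fin (n + 1) → ℝ, (∀ i, t i ∈ Set.Icc (0 : ℝ) 1) →
        ∀ i, δ' t i ∈ Set.Icc (0 : ℝ) 1 ∧ t i + δ' t i ∈ Set.Icc (0 : ℝ) 1) →
      ∀ t : Fin (n + 1) → ℝ, (∀ i, t i ∈ Set.Icc (0 : ℝ) 1) →
        lpNorm p (δ' t) < lpNorm p (deltaF f t) →
        Finset.univ.sup' Finset.univ_nonempty (fun j => t j + δ' t j) <
          Finset.univ.sup' Finset.univ_nonempty (fun j => t j + deltaF f t j) := by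
  intro δ' hδ' t ht hlt
  have hp0 : 0 < p := lt_of_lt_of_le one_pos hp
  set m := argmaxIdx t with hm
  have hmax := argmaxIdx_spec t
  have hf0 := (hf t ht).1
  -- lpNorm of deltaF is f t
  have hsum : (∑ k, |deltaF f t k| ^ p) = f t ^ p := by
    rw [Finset.sum_eq_single m]
    · simp [deltaF, ← hm, abs_of_nonneg hf0]
    · intro k _ hk
      simp [deltaF, ← hm, hk, Real.zero_rpow hp0.ne']
    · simp
  have hlp : lpNorm p (deltaF f t) = f t := by
    rw [lpNorm, hsum, ← Real.rpow_mul hf0, mul_one_div_cancel hp0.ne', Real.rpow_one]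
  rw [hlp] at hlt
  -- RHS is ≥ t m + f t
  have hrhs : t m + f t ≤ Finset.univ.sup' Finset.univ_nonempty
      (fun j => t j + deltaF f t j) := by
    have : t m + deltaF f t m = t m + f t := by simp [deltaF, ← hm]
    rw [← this]
    exact Finset.le_sup' (fun j => t j + deltaF f t j) (Finset.mem_univ m)
  refine lt_of_lt_of_le ?_ hrhs
  rw [Finset.sup'_lt_iff]
  intro j _
  have h1 : δ' t j ≤ lpNorm p (δ' t) :=
    le_trans (le_abs_self _) (abs_le_lpNorm p hp0 (δ' t) j)
  have := hmax j
  linarith
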